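/- Suboptimal cutting lemma (axiomatic form). For every real constant C' > 0 and natural numbers d ≥ 1 and s ≥ 1 there exists a real constant K such that the following holds. Let X be a set, H a finite set with |H| = n ≥ 1, for each a ∈ H let A_a ⊆ X, and let (T, I_H) be an abstract cell decomposition scheme for (H, (A_a)_{a ∈ H}) with parameters (C', d, s). Then for every real number r with 1 < r < n there exists a subset S ⊆ H such that |T(S)| ≤ K·r^d·(log(r+1))^d and every Δ ∈ T(S) is crossed by at most n/r of the sets A_a (a ∈ H). -/

import Mathlib

open scoped Classical

/-- An abstract cell decomposition scheme for `(H, (A a)_{a ∈ H})` with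
parameters `(C', d, s)`:
* `T` assigns to each `S ⊆ H` a finite family `T S` of subsets of `X` whose
  union is `X`, with `|T S| ≤ C'·(|S|^d + 1)`;
* `I` assigns to each cell a subset `I Δ ⊆ H` containing every `a ∈ H` for
  which `A a` crosses `Δ` (for `Δ ∈ Reg = ⋃_{S ⊆ H} T S`);
* for every `S ⊆ H` and `Δ ∈ Reg`: `Δ ∈ T S` iff `I Δ ∩ S = ∅` and `S₀ ⊆ S`
  for some defining set `S₀ ∈ D(Δ)`, where
  `D(Δ) = {S₀ ⊆ H : |S₀| ≤ s ∧ Δ ∈ T S₀}`. -/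
structure ACDScheme {α X : Type} (H : Finset α) (A : α → Set X)
    (C' : ℝ) (d s : ℕ) where
  T : Finset α → Finset (Set X)
  I : Set X → Finset α
  covers : ∀ S ⊆ H, ∀ x : X, ∃ Δ ∈ T S, x ∈ Δ
  card_bound : ∀ S ⊆ H, ((T S).card : ℝ) ≤ C' * ((S.card : ℝ) ^ d + 1)
  I_subset : ∀ Δ : Set X, I Δ ⊆ H
  crosses_mem_I : ∀ S ⊆ H, ∀ Δ ∈ T S, ∀ a ∈ H,
      (Δ ∩ A a).Nonempty → (Δ \ A a).Nonempty → a ∈ I Δ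
  mem_T_iff : ∀ S' ⊆ H, ∀ Δ ∈ T S', ∀ S ⊆ H,
      (Δ ∈ T S ↔ (I Δ ∩ S = ∅ ∧ ∃ S₀ ⊆ S, S₀.card ≤ s ∧ Δ ∈ T S₀))

open Finset


lemma binom_sum {α : Type} (R : Finset α) (p q : ℝ) :
    ∑ S ∈ R.powerset, p ^ S.card * q ^ (R.card - S.card) = (p + q) ^ R.card := by
  classical
  have h := Finset.prod_add (fun _ : α => p) (fun _ : α => q) R
  simp only [Finset.prod_const] at h
  rw [h]
  refine Finset.sum_congr rfl fun t ht => ?_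
  rw [Finset.card_sdiff_of_subset (Finset.mem_powerset.1 ht)]

lemma keysum {α : Type} (H S₀ I : Finset α) (hS₀ : S₀ ⊆ H) (hI : I ⊆ H)
    (hd : Disjoint S₀ I) (p : ℝ) :
    ∑ S ∈ H.powerset.filter (fun S => S₀ ⊆ S ∧ Disjoint I S),
      p ^ S.card * (1 - p) ^ (H.card - S.card)
      = p ^ S₀.card * (1 - p) ^ I.card := by
  classical
  set R := (H \ S₀) \ I with hRdef
  have hIH : I ⊆ H \ S₀ := fun x hx =>
    Finset.mem_sdiff.2 ⟨hI hx, fun hxS₀ => (Finset.disjoint_left.1 hd) hxS₀ hx⟩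
  have hcard : H.card = S₀.card + I.card + R.card := by
    have h1 : (H \ S₀).card = H.card - S₀.card := Finset.card_sdiff_of_subset hS₀
    have h2 : R.card = (H \ S₀).card - I.card := Finset.card_sdiff_of_subset hIH
    have h3 : S₀.card ≤ H.card := Finset.card_le_card hS₀
    have h4 : I.card ≤ (H \ S₀).card := Finset.card_le_card hIH
    omega
  have hbij : ∑ S ∈ H.powerset.filter (fun S => S₀ ⊆ S ∧ Disjoint I S),
      p ^ S.card * (1 - p) ^ (H.card - S.card)
      = ∑ S' ∈ R.powerset,
          p ^ (S₀.card + S'.card) * (1 - p) ^ (I.card + (R.card - S'.card)) := by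
    refine Finset.sum_nbij' (fun S => S \ S₀) (fun S' => S₀ ∪ S') ?_ ?_ ?_ ?_ ?_
    · intro S hS
      rw [Finset.mem_filter, Finset.mem_powerset] at hS
      obtain ⟨hSH, hS₀S, hIS⟩ := hS
      rw [Finset.mem_powerset]
      intro x hx
      rw [Finset.mem_sdiff] at hx
      exact Finset.mem_sdiff.2 ⟨Finset.mem_sdiff.2 ⟨hSH hx.1, hx.2⟩,
        fun hxI => (Finset.disjoint_left.1 hIS) hxI hx.1⟩
    · intro S' hS'
      rw [Finset.mem_powerset] at hS'
      rw [Finset.mem_filter, Finset.mem_powerset]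
      have hS'R : ∀ x ∈ S', x ∈ R := fun x hx => hS' hx
      refine ⟨?_, Finset.subset_union_left, ?_⟩
      · intro x hx
        rcases Finset.mem_union.1 hx with h | h
        · exact hS₀ h
        · exact (Finset.mem_sdiff.1 (Finset.mem_sdiff.1 (hS'R x h)).1).1
      · rw [Finset.disjoint_left]
        intro x hxI hxU
        rcases Finset.mem_union.1 hxU with h | h
        · exact (Finset.disjoint_left.1 hd) h hxI
        · exact (Finset.mem_sdiff.1 (hS'R x h)).2 hxI
    · intro S hS
      rw [Finset.mem_filter] at hS
      exact Finset.union_sdiff_of_subset hS.2.1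
    · intro S' hS'
      rw [Finset.mem_powerset] at hS'
      refine Finset.union_sdiff_cancel_left ?_
      rw [Finset.disjoint_left]
      intro x hx hx'
      exact (Finset.mem_sdiff.1 (Finset.mem_sdiff.1 (hS' hx')).1).2 hx
    · intro S hS
      rw [Finset.mem_filter, Finset.mem_powerset] at hS
      obtain ⟨hSH, hS₀S, hIS⟩ := hS
      have hc : S.card = S₀.card + (S \ S₀).card := by
        have := Finset.card_sdiff_of_subset hS₀S
        have := Finset.card_le_card hS₀S
        omega
      have hsub : S \ S₀ ⊆ R := by
        intro x hx
        rw [Finset.mem_sdiff] at hx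
        exact Finset.mem_sdiff.2 ⟨Finset.mem_sdiff.2 ⟨hSH hx.1, hx.2⟩,
          fun hxI => (Finset.disjoint_left.1 hIS) hxI hx.1⟩
      have hb : (S \ S₀).card ≤ R.card := Finset.card_le_card hsub
      have hSn : S.card ≤ H.card := Finset.card_le_card hSH
      congr 1
      · rw [hc]
      · congr 1
        omega
  rw [hbij]
  have : ∀ S' ∈ R.powerset,
      p ^ (S₀.card + S'.card) * (1 - p) ^ (I.card + (R.card - S'.card))
      = (p ^ S₀.card * (1 - p) ^ I.card) * (p ^ S'.card * (1 - p) ^ (R.card - S'.card)) := by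
    intro S' _
    rw [pow_add, pow_add]; ring
  rw [Finset.sum_congr rfl this, ← Finset.mul_sum, binom_sum]
  simp

lemma exists_c (A : ℝ) (hA : 0 < A) (s : ℕ) :
    ∃ c : ℝ, 2 ≤ c ∧ (2 * s : ℝ) ≤ c ∧
      A * c ^ s * Real.exp (((2 * s : ℝ) - c) * Real.log 2) ≤ 1 / 3 := by
  have hlog2 : (0:ℝ) < Real.log 2 := Real.log_pos (by norm_num)
  have htend : Filter.Tendsto
      (fun c : ℝ => A * c ^ s * Real.exp (((2 * s : ℝ) - c) * Real.log 2))
      Filter.atTop (nhds 0) := by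
    have h1 : Filter.Tendsto (fun y : ℝ => y ^ s * Real.exp (-y)) Filter.atTop (nhds 0) :=
      Real.tendsto_pow_mul_exp_neg_atTop_nhds_zero s
    have h2 : Filter.Tendsto (fun c : ℝ => c * Real.log 2) Filter.atTop Filter.atTop :=
      Filter.Tendsto.atTop_mul_const hlog2 Filter.tendsto_id
    have h4 : Filter.Tendsto
        (fun c : ℝ => (c * Real.log 2) ^ s * Real.exp (-(c * Real.log 2)))
        Filter.atTop (nhds 0) := h1.comp h2
    have h5 := h4.const_mul (A * Real.exp ((2 * s : ℝ) * Real.log 2) / (Real.log 2) ^ s)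
    rw [mul_zero] at h5
    refine h5.congr' ?_
    filter_upwards [Filter.eventually_ge_atTop (0:ℝ)] with c hc
    have hexp : Real.exp (((2 * s : ℝ) - c) * Real.log 2)
        = Real.exp ((2 * s : ℝ) * Real.log 2) * Real.exp (-(c * Real.log 2)) := by
      rw [← Real.exp_add]; ring_nf
    have hl : ((Real.log 2) ^ s : ℝ) ≠ 0 := by positivity
    rw [hexp, mul_pow]
    field_simp
  have hev : ∀ᶠ c in Filter.atTop,
      A * c ^ s * Real.exp (((2 * s : ℝ) - c) * Real.log 2) < 1 / 3 :=
    htend.eventually_lt_const (by norm_num : (0:ℝ) < 1/3)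
  obtain ⟨c, hc1, hc2, hc3⟩ :=
    ((hev.and ((Filter.eventually_ge_atTop (2:ℝ)).and
      (Filter.eventually_ge_atTop ((2 * s : ℝ))))).exists)
  exact ⟨c, hc2, hc3, le_of_lt hc1⟩

set_option maxHeartbeats 1000000 in
/-- **Suboptimal cutting lemma (axiomatic form).** For every `C' > 0`, `d ≥ 1`,
`s ≥ 1` there is a constant `K` such that for every abstract cell decomposition
scheme with parameters `(C', d, s)` over `(H, (A a))` with `|H| = n ≥ 1` and
every real `1 < r < n`, there exists `S ⊆ H` with
`|T S| ≤ K·r^d·(log (r+1))^d` and such that every `Δ ∈ T S` is crossed by at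
most `n/r` of the sets `A a` (`a ∈ H`). -/
theorem suboptimal_cutting_lemma (C' : ℝ) (hC' : 0 < C') (d s : ℕ)
    (hd : 1 ≤ d) (hs : 1 ≤ s) :
    ∃ K : ℝ, ∀ (α X : Type) (H : Finset α) (A : α → Set X)
      (𝒯 : ACDScheme H A C' d s), 1 ≤ H.card →
      ∀ r : ℝ, 1 < r → r < (H.card : ℝ) →
      ∃ S ⊆ H, ((𝒯.T S).card : ℝ) ≤ K * r ^ d * (Real.log (r + 1)) ^ d ∧
        ∀ Δ ∈ 𝒯.T S,
          ((H.filter (fun a =>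
              (Δ ∩ A a).Nonempty ∧ (Δ \ A a).Nonempty)).card : ℝ)
            ≤ (H.card : ℝ) / r := by
  classical
  have hlog2 : (0:ℝ) < Real.log 2 := Real.log_pos (by norm_num)
  set A0 : ℝ := C' * ((s:ℝ)^d + 1) * ((s:ℝ) + 1) with hA0def
  have hA0 : 0 < A0 := by positivity
  obtain ⟨c, hc2, hc2s, hcbound⟩ := exists_c A0 hA0 s
  have hcpos : (0:ℝ) < c := lt_of_lt_of_le (by norm_num) hc2
  set K : ℝ := C' * ((3*c)^d + ((Real.log 2)⁻¹)^d) with hKdef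
  refine ⟨K, ?_⟩
  intro α X H A 𝒯 hn r hr1 hrN
  set N : ℝ := (H.card : ℝ) with hNdef
  set L : ℝ := Real.log (r + 1) with hLdef
  have hr0 : (0:ℝ) < r := lt_trans one_pos hr1
  have hLlog2 : Real.log 2 ≤ L := Real.log_le_log (by norm_num) (by linarith)
  have hLpos : 0 < L := lt_of_lt_of_le hlog2 hLlog2
  have hLr : L ≤ r := by
    have := Real.log_le_sub_one_of_pos (by linarith : (0:ℝ) < r + 1)
    rw [← hLdef] at this; linarith
  have hNpos : (0:ℝ) < N := lt_trans hr0 hrN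
  set t : ℝ := c * r * L with htdef
  have htpos : 0 < t := by positivity
  have ht1 : (1:ℝ) ≤ t := by
    have h9 := Real.log_two_gt_d9
    nlinarith [mul_le_mul hc2 (le_of_lt hr1) (by norm_num : (0:ℝ) ≤ 1) (by linarith : (0:ℝ) ≤ c)]
  -- the crossing number of a cell
  set cross : Set X → ℝ := fun Δ =>
    ((H.filter (fun a => (Δ ∩ A a).Nonempty ∧ (Δ \ A a).Nonempty)).card : ℝ) with hcrossdef
  -- the card bound used in both cases
  have hKcard : ∀ S ⊆ H, (S.card : ℝ) ≤ 3 * t →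
      ((𝒯.T S).card : ℝ) ≤ K * r ^ d * L ^ d := by
    intro S hSH hS3t
    have h1 : ((𝒯.T S).card : ℝ) ≤ C' * ((S.card : ℝ) ^ d + 1) := 𝒯.card_bound S hSH
    have h2 : ((S.card : ℝ)) ^ d ≤ (3*t) ^ d :=
      pow_le_pow_left₀ (Nat.cast_nonneg _) hS3t d
    have h3 : (3*t) ^ d = (3*c)^d * (r^d * L^d) := by
      rw [htdef]
      rw [show (3 : ℝ) * (c * r * L) = (3*c) * (r * L) by ring,
        mul_pow ((3:ℝ)*c) (r*L) d, mul_pow r L d]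
    have h4 : (1:ℝ) ≤ ((Real.log 2)⁻¹)^d * (r^d * L^d) := by
      have : (1:ℝ) ≤ (Real.log 2)⁻¹ * (r * L) := by
        have hrL : Real.log 2 ≤ r * L :=
          le_trans hLlog2 (le_mul_of_one_le_left (le_of_lt hLpos) (le_of_lt hr1))
        have := (one_le_div hlog2).2 hrL
        rwa [div_eq_inv_mul] at this
      calc (1:ℝ) = 1 ^ d := (one_pow d).symm
        _ ≤ ((Real.log 2)⁻¹ * (r * L)) ^ d := pow_le_pow_left₀ (by norm_num) this d
        _ = ((Real.log 2)⁻¹)^d * (r^d * L^d) := by rw [mul_pow, mul_pow]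
    calc ((𝒯.T S).card : ℝ) ≤ C' * ((S.card : ℝ) ^ d + 1) := by exact h1
      _ ≤ C' * ((3*c)^d * (r^d * L^d) + ((Real.log 2)⁻¹)^d * (r^d * L^d)) := by
          apply mul_le_mul_of_nonneg_left _ (le_of_lt hC')
          rw [← h3]
          exact add_le_add h2 h4
      _ = K * r ^ d * L ^ d := by rw [hKdef]; ring
  by_cases hcase : N ≤ t
  · -- take S = H : no crossings at all
    refine ⟨H, Finset.Subset.refl H, ?_, ?_⟩
    · exact hKcard H (Finset.Subset.refl H) (by rw [← hNdef]; linarith)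
    · intro Δ hΔ
      obtain ⟨hIH, -⟩ := (𝒯.mem_T_iff H (Finset.Subset.refl H) Δ hΔ H (Finset.Subset.refl H)).1 hΔ
      have hfe : H.filter (fun a => (Δ ∩ A a).Nonempty ∧ (Δ \ A a).Nonempty) = ∅ := by
        rw [Finset.filter_eq_empty_iff]
        rintro a ha ⟨h1, h2⟩
        have haI := 𝒯.crosses_mem_I H (Finset.Subset.refl H) Δ hΔ a ha h1 h2
        have : a ∈ 𝒯.I Δ ∩ H := Finset.mem_inter.2 ⟨haI, ha⟩
        rw [hIH] at this
        exact Finset.notMem_empty a this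
      rw [hfe]
      simp only [Finset.card_empty, Nat.cast_zero]
      positivity
  · push_neg at hcase
    set p : ℝ := t / N with hpdef
    have hp0 : 0 < p := div_pos htpos hNpos
    have hp1 : p < 1 := (div_lt_one hNpos).2 hcase
    have hNp : N * p = t := by rw [hpdef]; field_simp
    set w : Finset α → ℝ := fun S => p ^ S.card * (1 - p) ^ (H.card - S.card) with hwdef
    have hwpos : ∀ S : Finset α, 0 < w S := fun S =>
      mul_pos (pow_pos hp0 _) (pow_pos (by linarith) _)
    -- total weight is 1
    have hsum1 : ∑ S ∈ H.powerset, w S = 1 := by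
      have hk := keysum H ∅ ∅ (Finset.empty_subset H) (Finset.empty_subset H)
        (Finset.disjoint_empty_left ∅) p
      have hfeq : H.powerset.filter (fun S => (∅ : Finset α) ⊆ S ∧ Disjoint (∅ : Finset α) S)
          = H.powerset :=
        Finset.filter_true_of_mem (fun S _ => ⟨Finset.empty_subset S, Finset.disjoint_empty_left S⟩)
      rw [hfeq] at hk
      simpa [hwdef] using hk
    -- expected size of the sample
    have hEcard : ∑ S ∈ H.powerset, w S * (S.card : ℝ) = t := by
      have hterm : ∀ S ∈ H.powerset, w S * (S.card : ℝ)
          = ∑ a ∈ H, (if a ∈ S then w S else 0) := by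
        intro S hS
        rw [Finset.sum_ite_mem]
        rw [Finset.sum_const]
        have : H ∩ S = S := Finset.inter_eq_right.2 (Finset.mem_powerset.1 hS)
        rw [this, nsmul_eq_mul, mul_comm]
      rw [Finset.sum_congr rfl hterm, Finset.sum_comm]
      have hterm2 : ∀ a ∈ H, (∑ S ∈ H.powerset, if a ∈ S then w S else 0) = p := by
        intro a ha
        rw [← Finset.sum_filter]
        have hfeq : H.powerset.filter (fun S => a ∈ S)
            = H.powerset.filter (fun S => ({a} : Finset α) ⊆ S ∧ Disjoint (∅ : Finset α) S) := by
          apply Finset.filter_congr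
          intro S _
          simp [Finset.singleton_subset_iff]
        rw [hfeq]
        have hk := keysum H {a} ∅ (Finset.singleton_subset_iff.2 ha) (Finset.empty_subset H)
          (Finset.disjoint_empty_right _) p
        simpa [hwdef] using hk
      rw [Finset.sum_congr rfl hterm2, Finset.sum_const, nsmul_eq_mul, ← hNdef, hNp]
    -- Markov for sample size
    have hMarkov : ∑ S ∈ H.powerset.filter (fun S => 3*t ≤ (S.card : ℝ)), w S ≤ 1/3 := by
      have step1 : ∑ S ∈ H.powerset.filter (fun S => 3*t ≤ (S.card : ℝ)), w S
          ≤ ∑ S ∈ H.powerset.filter (fun S => 3*t ≤ (S.card : ℝ)),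
              w S * (S.card : ℝ) / (3*t) := by
        apply Finset.sum_le_sum
        intro S hS
        have h3t := (Finset.mem_filter.1 hS).2
        rw [le_div_iff₀ (by positivity : (0:ℝ) < 3*t)]
        nlinarith [(hwpos S).le]
      have step2 : ∑ S ∈ H.powerset.filter (fun S => 3*t ≤ (S.card : ℝ)),
            w S * (S.card : ℝ) / (3*t)
          ≤ ∑ S ∈ H.powerset, w S * (S.card : ℝ) / (3*t) := by
        apply Finset.sum_le_sum_of_subset_of_nonneg (Finset.filter_subset _ _)
        intro S _ _
        have := (hwpos S).le
        positivity
      have step3 : ∑ S ∈ H.powerset, w S * (S.card : ℝ) / (3*t) = 1/3 := by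
        rw [← Finset.sum_div, hEcard]
        field_simp
      linarith
    -- the bad cells of a sample
    set badT : Finset α → Finset (Set X) :=
      fun S' => (𝒯.T S').filter (fun Δ => N / r < cross Δ) with hbadTdef
    set smalls : Finset (Finset α) := H.powerset.filter (fun S₀ => S₀.card ≤ s) with hsmallsdef
    set cnt : Finset α → Finset α → ℕ :=
      fun S₀ S => ((badT S₀).filter (fun Δ => S₀ ⊆ S ∧ Disjoint (𝒯.I Δ) S)).card with hcntdef
    -- counting bound
    have hstep2 : ∀ S ∈ H.powerset, ((badT S).card : ℝ) ≤ ∑ S₀ ∈ smalls, (cnt S₀ S : ℝ) := by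
      intro S hS
      have hSH := Finset.mem_powerset.1 hS
      have hsub : badT S ⊆ smalls.biUnion
          (fun S₀ => (badT S₀).filter (fun Δ => S₀ ⊆ S ∧ Disjoint (𝒯.I Δ) S)) := by
        intro Δ hΔ
        rw [hbadTdef] at hΔ
        simp only [Finset.mem_filter] at hΔ
        obtain ⟨hΔT, hbad⟩ := hΔ
        obtain ⟨hIS, S₀, hS₀S, hS₀c, hΔ₀⟩ := (𝒯.mem_T_iff S hSH Δ hΔT S hSH).1 hΔT
        refine Finset.mem_biUnion.2 ⟨S₀, ?_, ?_⟩
        · rw [hsmallsdef]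
          exact Finset.mem_filter.2 ⟨Finset.mem_powerset.2 (hS₀S.trans hSH), hS₀c⟩
        · refine Finset.mem_filter.2 ⟨?_, hS₀S, Finset.disjoint_iff_inter_eq_empty.2 hIS⟩
          rw [hbadTdef]
          exact Finset.mem_filter.2 ⟨hΔ₀, hbad⟩
      calc ((badT S).card : ℝ)
          ≤ ((smalls.biUnion (fun S₀ => (badT S₀).filter
              (fun Δ => S₀ ⊆ S ∧ Disjoint (𝒯.I Δ) S))).card : ℝ) := by
            exact Nat.cast_le.2 (Finset.card_le_card hsub)
        _ ≤ ∑ S₀ ∈ smalls, (cnt S₀ S : ℝ) := by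
            simp only [hcntdef]
            exact_mod_cast Nat.cast_le.2 (Finset.card_biUnion_le)
    -- per-defining-set bound
    have hstep4 : ∀ S₀ ∈ smalls, ∑ S ∈ H.powerset, w S * (cnt S₀ S : ℝ)
        ≤ C' * ((s:ℝ)^d + 1) * (p ^ S₀.card * Real.exp (-(c*L))) := by
      intro S₀ hS₀
      rw [hsmallsdef, Finset.mem_filter, Finset.mem_powerset] at hS₀
      obtain ⟨hS₀H, hS₀s⟩ := hS₀
      have hrw : ∀ S : Finset α, w S * (cnt S₀ S : ℝ)
          = ∑ Δ ∈ badT S₀, (if (S₀ ⊆ S ∧ Disjoint (𝒯.I Δ) S) then w S else 0) := by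
        intro S
        rw [← Finset.sum_filter, Finset.sum_const, nsmul_eq_mul]
        simp only [hcntdef]
        exact mul_comm _ _
      rw [Finset.sum_congr rfl (fun S _ => hrw S), Finset.sum_comm]
      have hinner : ∀ Δ ∈ badT S₀,
          (∑ S ∈ H.powerset, if (S₀ ⊆ S ∧ Disjoint (𝒯.I Δ) S) then w S else 0)
          ≤ p ^ S₀.card * Real.exp (-(c*L)) := by
        intro Δ hΔ
        rw [hbadTdef, Finset.mem_filter] at hΔ
        obtain ⟨hΔT₀, hbad⟩ := hΔ
        have hdisj : Disjoint S₀ (𝒯.I Δ) := by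
          obtain ⟨hI₀, -⟩ := (𝒯.mem_T_iff S₀ hS₀H Δ hΔT₀ S₀ hS₀H).1 hΔT₀
          exact (Finset.disjoint_iff_inter_eq_empty.2 hI₀).symm
        rw [← Finset.sum_filter]
        have hk := keysum H S₀ (𝒯.I Δ) hS₀H (𝒯.I_subset Δ) hdisj p
        have hks : ∑ S ∈ H.powerset.filter (fun S => S₀ ⊆ S ∧ Disjoint (𝒯.I Δ) S), w S
            = p ^ S₀.card * (1 - p) ^ (𝒯.I Δ).card := by
          simp only [hwdef]
          exact hk
        -- now bound (1-p)^(I Δ).card ≤ exp(-(c*L))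
        have hcm : N / r ≤ ((𝒯.I Δ).card : ℝ) := by
          have hsubI : H.filter (fun a => (Δ ∩ A a).Nonempty ∧ (Δ \ A a).Nonempty) ⊆ 𝒯.I Δ := by
            intro a ha
            rw [Finset.mem_filter] at ha
            exact 𝒯.crosses_mem_I S₀ hS₀H Δ hΔT₀ a ha.1 ha.2.1 ha.2.2
          have hcast : ((H.filter (fun a => (Δ ∩ A a).Nonempty ∧ (Δ \ A a).Nonempty)).card : ℝ)
              ≤ ((𝒯.I Δ).card : ℝ) := Nat.cast_le.2 (Finset.card_le_card hsubI)
          simp only [hcrossdef] at hbad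
          exact le_trans (le_of_lt hbad) hcast
        have hexp : (1 - p) ^ (𝒯.I Δ).card ≤ Real.exp (-(c*L)) := by
          have h1p : (0:ℝ) ≤ 1 - p := by linarith
          have hle : (1 - p) ≤ Real.exp (-p) := by
            have := Real.add_one_le_exp (-p)
            linarith
          calc (1 - p) ^ (𝒯.I Δ).card ≤ (Real.exp (-p)) ^ (𝒯.I Δ).card :=
                pow_le_pow_left₀ h1p hle _
            _ = Real.exp (((𝒯.I Δ).card : ℝ) * (-p)) := by
                rw [Real.exp_nat_mul]
            _ ≤ Real.exp (-(c*L)) := by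
                apply Real.exp_le_exp.2
                have hcl : c * L = t / r := by rw [htdef]; field_simp
                rw [hcl]
                have : t / r ≤ ((𝒯.I Δ).card : ℝ) * p := by
                  have hNr : 0 < N / r := div_pos hNpos hr0
                  calc t / r = (N / r) * p := by rw [hpdef]; field_simp
                    _ ≤ ((𝒯.I Δ).card : ℝ) * p := by
                        apply mul_le_mul_of_nonneg_right hcm (le_of_lt hp0)
                linarith
        rw [hks]
        exact mul_le_mul_of_nonneg_left hexp (pow_pos hp0 _).le
      calc ∑ Δ ∈ badT S₀, ∑ S ∈ H.powerset,
            (if (S₀ ⊆ S ∧ Disjoint (𝒯.I Δ) S) then w S else 0)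
          ≤ ∑ _Δ ∈ badT S₀, p ^ S₀.card * Real.exp (-(c*L)) := by
            exact Finset.sum_le_sum hinner
        _ = ((badT S₀).card : ℝ) * (p ^ S₀.card * Real.exp (-(c*L))) := by
            rw [Finset.sum_const, nsmul_eq_mul]
        _ ≤ C' * ((s:ℝ)^d + 1) * (p ^ S₀.card * Real.exp (-(c*L))) := by
            apply mul_le_mul_of_nonneg_right _ (by positivity)
            have hb1 : ((badT S₀).card : ℝ) ≤ ((𝒯.T S₀).card : ℝ) := by
              rw [hbadTdef]
              exact_mod_cast Nat.cast_le.2 (Finset.card_le_card (Finset.filter_subset _ _))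
            have hb2 : ((𝒯.T S₀).card : ℝ) ≤ C' * ((S₀.card : ℝ)^d + 1) :=
              𝒯.card_bound S₀ hS₀H
            have hb3 : ((S₀.card : ℝ))^d ≤ ((s:ℝ))^d := by
              apply pow_le_pow_left₀ (Nat.cast_nonneg _)
              exact_mod_cast hS₀s
            calc ((badT S₀).card : ℝ) ≤ C' * ((S₀.card : ℝ)^d + 1) := by exact le_trans hb1 hb2
              _ ≤ C' * ((s:ℝ)^d + 1) := by nlinarith
    -- sum over all small defining sets
    have hsmallsum : ∑ S₀ ∈ smalls, p ^ S₀.card ≤ ((s:ℝ) + 1) * t ^ s := by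
      have hbiU : smalls = (Finset.range (s+1)).biUnion (fun k => H.powersetCard k) := by
        ext S₀
        rw [hsmallsdef]
        simp only [Finset.mem_filter, Finset.mem_powerset, Finset.mem_biUnion,
          Finset.mem_range, Finset.mem_powersetCard]
        constructor
        · rintro ⟨h1, h2⟩; exact ⟨S₀.card, Nat.lt_succ_of_le h2, h1, rfl⟩
        · rintro ⟨k, hk, h1, h2⟩; exact ⟨h1, by omega⟩
      have hdisj : ∀ k₁ ∈ Finset.range (s+1), ∀ k₂ ∈ Finset.range (s+1), k₁ ≠ k₂ →
          Disjoint (H.powersetCard k₁) (H.powersetCard k₂) := by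
        intro k₁ _ k₂ _ hne
        rw [Finset.disjoint_left]
        intro S₀ h1 h2
        rw [Finset.mem_powersetCard] at h1 h2
        exact hne (h1.2.symm.trans h2.2)
      rw [hbiU, Finset.sum_biUnion (fun k₁ h₁ k₂ h₂ hne => hdisj k₁ h₁ k₂ h₂ hne)]
      have hin : ∀ k ∈ Finset.range (s+1),
          ∑ S₀ ∈ H.powersetCard k, p ^ S₀.card ≤ t ^ s := by
        intro k hk
        rw [Finset.mem_range] at hk
        have h1 : ∑ S₀ ∈ H.powersetCard k, p ^ S₀.card
            = ((H.card.choose k : ℕ) : ℝ) * p ^ k := by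
          rw [Finset.sum_congr rfl (fun S₀ hS₀ => by
            rw [(Finset.mem_powersetCard.1 hS₀).2])]
          rw [Finset.sum_const, nsmul_eq_mul, Finset.card_powersetCard]
        rw [h1]
        have h2 : ((H.card.choose k : ℕ) : ℝ) ≤ N ^ k := by
          rw [hNdef]
          exact_mod_cast Nat.choose_le_pow H.card k
        calc ((H.card.choose k : ℕ) : ℝ) * p ^ k ≤ N ^ k * p ^ k := by
              apply mul_le_mul_of_nonneg_right h2 (pow_pos hp0 _).le
          _ = t ^ k := by rw [← mul_pow, hNp]
          _ ≤ t ^ s := by exact pow_le_pow_right₀ ht1 (by omega)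
      calc ∑ k ∈ Finset.range (s+1), ∑ S₀ ∈ H.powersetCard k, p ^ S₀.card
          ≤ ∑ _k ∈ Finset.range (s+1), t ^ s := by exact Finset.sum_le_sum hin
        _ = ((s:ℝ) + 1) * t ^ s := by
            rw [Finset.sum_const, Finset.card_range, nsmul_eq_mul]
            push_cast; ring
    -- the expected number of bad cells is small
    have hBadE : ∑ S ∈ H.powerset.filter (fun S => (badT S).Nonempty), w S ≤ 1/3 := by
      have hEb1 : ∑ S ∈ H.powerset.filter (fun S => (badT S).Nonempty), w S
          ≤ ∑ S ∈ H.powerset, w S * ((badT S).card : ℝ) := by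
        calc ∑ S ∈ H.powerset.filter (fun S => (badT S).Nonempty), w S
            ≤ ∑ S ∈ H.powerset.filter (fun S => (badT S).Nonempty),
                w S * ((badT S).card : ℝ) := by
              apply Finset.sum_le_sum
              intro S hS
              have hne := (Finset.mem_filter.1 hS).2
              have h1 : (1:ℝ) ≤ ((badT S).card : ℝ) :=
                Nat.one_le_cast.2 (Finset.card_pos.2 hne)
              nlinarith [(hwpos S).le]
          _ ≤ ∑ S ∈ H.powerset, w S * ((badT S).card : ℝ) := by
              apply Finset.sum_le_sum_of_subset_of_nonneg (Finset.filter_subset _ _)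
              intro S _ _
              exact mul_nonneg (hwpos S).le (Nat.cast_nonneg _)
      have hEb2 : ∑ S ∈ H.powerset, w S * ((badT S).card : ℝ)
          ≤ ∑ S₀ ∈ smalls, ∑ S ∈ H.powerset, w S * (cnt S₀ S : ℝ) := by
        calc ∑ S ∈ H.powerset, w S * ((badT S).card : ℝ)
            ≤ ∑ S ∈ H.powerset, w S * (∑ S₀ ∈ smalls, (cnt S₀ S : ℝ)) := by
              apply Finset.sum_le_sum
              intro S hS
              exact mul_le_mul_of_nonneg_left (hstep2 S hS) (hwpos S).le
          _ = ∑ S ∈ H.powerset, ∑ S₀ ∈ smalls, w S * (cnt S₀ S : ℝ) := by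
              refine Finset.sum_congr rfl fun S _ => Finset.mul_sum _ _ _
          _ = ∑ S₀ ∈ smalls, ∑ S ∈ H.powerset, w S * (cnt S₀ S : ℝ) := by
              exact Finset.sum_comm
      have hEb3 : ∑ S₀ ∈ smalls, ∑ S ∈ H.powerset, w S * (cnt S₀ S : ℝ)
          ≤ C' * ((s:ℝ)^d + 1) * Real.exp (-(c*L)) * (((s:ℝ) + 1) * t ^ s) := by
        calc ∑ S₀ ∈ smalls, ∑ S ∈ H.powerset, w S * (cnt S₀ S : ℝ)
            ≤ ∑ S₀ ∈ smalls, C' * ((s:ℝ)^d + 1) * (p ^ S₀.card * Real.exp (-(c*L))) := by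
              exact Finset.sum_le_sum hstep4
          _ = C' * ((s:ℝ)^d + 1) * Real.exp (-(c*L)) * (∑ S₀ ∈ smalls, p ^ S₀.card) := by
              rw [Finset.mul_sum]
              refine Finset.sum_congr rfl fun S₀ _ => by ring
          _ ≤ C' * ((s:ℝ)^d + 1) * Real.exp (-(c*L)) * (((s:ℝ) + 1) * t ^ s) := by
              apply mul_le_mul_of_nonneg_left hsmallsum (by positivity)
      have hEb4 : C' * ((s:ℝ)^d + 1) * Real.exp (-(c*L)) * (((s:ℝ) + 1) * t ^ s) ≤ 1/3 := by
        have hts : t ^ s ≤ c ^ s * (r+1) ^ (2*s) := by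
          have htle : t ≤ c * (r+1)^2 := by
            have h1 : r * L ≤ (r+1)*(r+1) := by nlinarith
            calc t = c * (r * L) := by rw [htdef]; ring
              _ ≤ c * ((r+1)*(r+1)) := by nlinarith
              _ = c * (r+1)^2 := by ring
          calc t ^ s ≤ (c * (r+1)^2) ^ s := pow_le_pow_left₀ (le_of_lt htpos) htle s
            _ = c ^ s * (r+1) ^ (2*s) := by rw [mul_pow, ← pow_mul]
        have hrexp : ((r+1):ℝ) ^ (2*s) = Real.exp (((2*s : ℕ) : ℝ) * L) := by
          rw [Real.exp_nat_mul, hLdef, Real.exp_log (by linarith : (0:ℝ) < r + 1)]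
        have hkey : Real.exp (-(c*L)) * t ^ s ≤ c ^ s * Real.exp (((2*s:ℝ) - c) * Real.log 2) := by
          calc Real.exp (-(c*L)) * t ^ s
              ≤ Real.exp (-(c*L)) * (c ^ s * (r+1) ^ (2*s)) := by
                apply mul_le_mul_of_nonneg_left hts (Real.exp_nonneg _)
            _ = c ^ s * (Real.exp (((2*s:ℕ):ℝ) * L) * Real.exp (-(c*L))) := by
                rw [hrexp]; ring
            _ = c ^ s * Real.exp (((2*s:ℝ) - c) * L) := by
                rw [← Real.exp_add]
                congr 1
                push_cast
                ring
            _ ≤ c ^ s * Real.exp (((2*s:ℝ) - c) * Real.log 2) := by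
                apply mul_le_mul_of_nonneg_left _ (pow_pos hcpos s).le
                apply Real.exp_le_exp.2
                apply mul_le_mul_of_nonpos_left hLlog2
                linarith
        calc C' * ((s:ℝ)^d + 1) * Real.exp (-(c*L)) * (((s:ℝ) + 1) * t ^ s)
            = C' * ((s:ℝ)^d + 1) * ((s:ℝ) + 1) * (Real.exp (-(c*L)) * t ^ s) := by ring
          _ ≤ C' * ((s:ℝ)^d + 1) * ((s:ℝ) + 1) *
              (c ^ s * Real.exp (((2*s:ℝ) - c) * Real.log 2)) := by
              apply mul_le_mul_of_nonneg_left hkey (by positivity)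
          _ = A0 * c ^ s * Real.exp (((2*s:ℝ) - c) * Real.log 2) := by
              rw [hA0def]; ring
          _ ≤ 1/3 := hcbound
      linarith
    -- there is a good sample
    have hG : ∃ S ∈ H.powerset, (S.card : ℝ) < 3*t ∧ badT S = ∅ := by
      by_contra hcon
      push_neg at hcon
      have hsplit := Finset.sum_filter_add_sum_filter_not H.powerset
        (fun S => 3*t ≤ (S.card : ℝ)) w
      have hsub2 : H.powerset.filter (fun S => ¬ (3*t ≤ (S.card : ℝ)))
          ⊆ H.powerset.filter (fun S => (badT S).Nonempty) := by
        intro S hS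
        rw [Finset.mem_filter] at hS ⊢
        obtain ⟨hSp, hlt⟩ := hS
        refine ⟨hSp, ?_⟩
        rw [not_le] at hlt
        have := hcon S hSp hlt
        exact this
      have h2 : ∑ S ∈ H.powerset.filter (fun S => ¬ (3*t ≤ (S.card : ℝ))), w S
          ≤ ∑ S ∈ H.powerset.filter (fun S => (badT S).Nonempty), w S :=
        Finset.sum_le_sum_of_subset_of_nonneg hsub2 (fun S _ _ => (hwpos S).le)
      rw [hsum1] at hsplit
      linarith
    obtain ⟨S, hSpow, hScard, hSbad⟩ := hG
    refine ⟨S, Finset.mem_powerset.1 hSpow, ?_, ?_⟩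
    · exact hKcard S (Finset.mem_powerset.1 hSpow) (le_of_lt hScard)
    · intro Δ hΔ
      by_contra hcon
      push_neg at hcon
      have : Δ ∈ badT S := by
        rw [hbadTdef]
        exact Finset.mem_filter.2 ⟨hΔ, hcon⟩
      rw [hSbad] at this
      exact Finset.notMem_empty Δ this
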